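/- arXiv:0705.3992 — 5 statements merged into one kernel-verified Lean document; each statement's English description precedes it below -/
import Mathlib

section
/- Let the random ensemble R_{m,n} be the uniform distribution over all binary m×n matrices. For each weight w with 0 ≤ w ≤ n, the expected number of stopping-set vectors of Hamming weight w, i.e. E[ #{x ∈ {0,1}^n : wt(x)=w and for every row h_i of H, h_i∘x ≠ 1} ], equals C(n,w)·(1 − w·2^{−w})^m. -/
/-- Integer inner product of two binary (Bool) vectors. -/
def ip {n : ℕ} (h x : Fin n → Bool) : ℕ :=
  ∑ i, if h i ∧ x i then 1 else 0

/-- Hamming weight of a binary vector. -/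
def wt {n : ℕ} (x : Fin n → Bool) : ℕ :=
  (Finset.univ.filter fun i => x i = true).card

/-- Number of stopping-set vectors of Hamming weight `w` of the matrix `H`. -/
def SSdist (m n w : ℕ) (H : Fin m → Fin n → Bool) : ℕ :=
  (Finset.univ.filter fun x : Fin n → Bool =>
    wt x = w ∧ ∀ i : Fin m, ip (H i) x ≠ 1).card

open Finset

lemma count_fixed (n : ℕ) (S : Finset (Fin n)) (g : Fin n → Bool) :
    (univ.filter fun h : Fin n → Bool => ∀ i ∈ S, h i = g i).card = 2 ^ (n - S.card) := by
  have heq : (univ.filter fun h : Fin n → Bool => ∀ i ∈ S, h i = g i)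
      = Fintype.piFinset (fun i => if i ∈ S then {g i} else univ) := by
    ext h
    simp only [mem_filter, mem_univ, true_and, Fintype.mem_piFinset]
    constructor
    · intro hh i
      by_cases hi : i ∈ S <;> simp [hi, hh]
    · intro hh i hi
      have := hh i
      simpa [hi] using this
  rw [heq, Fintype.card_piFinset]
  have hcards : ∀ i, (if i ∈ S then ({g i} : Finset Bool) else univ).card
      = if i ∈ S then 1 else 2 := by
    intro i; by_cases hi : i ∈ S <;> simp [hi]
  simp only [hcards]
  rw [Finset.prod_ite, Finset.prod_const, Finset.prod_const]
  have h1 : (univ.filter (· ∈ S)) = S := by simp [Finset.filter_mem_eq_inter]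
  have h2 : (univ.filter (· ∉ S)) = Sᶜ := by ext i; simp
  rw [h1, h2, card_compl]
  simp

lemma ip_eq_card {n : ℕ} (h x : Fin n → Bool) :
    ip h x = ((univ.filter fun i => x i = true).filter fun i => h i = true).card := by
  rw [ip, Finset.filter_filter]
  rw [Finset.card_filter]
  congr 1
  ext i
  by_cases hx : x i <;> by_cases hh : h i <;> simp [hx, hh]

lemma count_one {n w : ℕ} (x : Fin n → Bool) (hx : wt x = w) :
    (univ.filter fun h : Fin n → Bool => ip h x = 1).card = w * 2 ^ (n - w) := by
  set S := univ.filter fun i => x i = true with hS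
  have hScard : S.card = w := hx
  have heq : (univ.filter fun h : Fin n → Bool => ip h x = 1)
      = S.biUnion (fun a => univ.filter fun h : Fin n → Bool => ∀ i ∈ S, h i = decide (i = a)) := by
    ext h
    simp only [mem_filter, mem_univ, true_and, mem_biUnion]
    rw [ip_eq_card, ← hS, Finset.card_eq_one]
    constructor
    · rintro ⟨a, ha⟩
      have haS : a ∈ S ∧ h a = true := by
        have : a ∈ S.filter fun i => h i = true := by rw [ha]; exact mem_singleton_self a
        simpa [mem_filter] using this
      refine ⟨a, haS.1, fun i hi => ?_⟩
      by_cases hia : i = a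
      · simp [hia, haS.2]
      · have hd : decide (i = a) = false := by simp [hia]
        rw [hd, Bool.eq_false_iff]
        intro hih
        have : i ∈ S.filter fun j => h j = true := mem_filter.2 ⟨hi, hih⟩
        rw [ha, mem_singleton] at this
        exact hia this
    · rintro ⟨a, haS, hall⟩
      refine ⟨a, ?_⟩
      ext i
      simp only [mem_filter, mem_singleton]
      constructor
      · rintro ⟨hiS, hih⟩
        by_contra hia
        have := hall i hiS
        simp [hih, hia] at this
      · rintro rfl
        have h2 := hall i haS
        simp at h2
        exact ⟨haS, h2⟩
  rw [heq, Finset.card_biUnion, ← hScard]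
  · rw [Finset.sum_congr rfl (fun a _ => count_fixed n S (fun i => decide (i = a)))]
    simp [mul_comm]
  · intro a ha b hb hab
    simp only [Finset.disjoint_left, mem_filter, mem_univ, true_and]
    rintro h h1 h2
    have e1 := h1 b hb
    have e2 := h2 b hb
    simp at e2
    rw [e2] at e1
    simp at e1
    exact hab e1.symm

lemma count_not_one {n w : ℕ} (x : Fin n → Bool) (hx : wt x = w) :
    (univ.filter fun h : Fin n → Bool => ip h x ≠ 1).card = 2 ^ n - w * 2 ^ (n - w) := by
  have h1 : (univ.filter fun h : Fin n → Bool => ip h x ≠ 1)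
      = univ \ (univ.filter fun h : Fin n → Bool => ip h x = 1) := by
    rw [← Finset.filter_not]
  rw [h1, Finset.card_sdiff_of_subset (Finset.filter_subset _ _), count_one x hx]
  congr 1
  simp [card_univ]

lemma count_matrix {m n w : ℕ} (x : Fin n → Bool) (hx : wt x = w) :
    (univ.filter fun H : Fin m → Fin n → Bool => ∀ i, ip (H i) x ≠ 1).card
      = (2 ^ n - w * 2 ^ (n - w)) ^ m := by
  have heq : (univ.filter fun H : Fin m → Fin n → Bool => ∀ i, ip (H i) x ≠ 1)
      = Fintype.piFinset (fun _ : Fin m => univ.filter fun h : Fin n → Bool => ip h x ≠ 1) := by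
    ext H
    simp [Fintype.mem_piFinset]
  rw [heq, Fintype.card_piFinset]
  simp [count_not_one x hx]

lemma card_weight (n w : ℕ) :
    (univ.filter fun x : Fin n → Bool => wt x = w).card = n.choose w := by
  have h1 : (Finset.powersetCard w (univ : Finset (Fin n))).card = n.choose w := by
    rw [Finset.card_powersetCard, card_univ, Fintype.card_fin]
  rw [← h1]
  apply Finset.card_bij (fun x _ => univ.filter fun i => x i = true)
  · intro x hx
    simp only [mem_filter, mem_univ, true_and] at hx
    rw [Finset.mem_powersetCard]
    exact ⟨Finset.subset_univ _, hx⟩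
  · intro x hx y hy hxy
    funext i
    have := Finset.ext_iff.1 hxy i
    simp only [mem_filter, mem_univ, true_and] at this
    by_cases hxi : x i = true
    · rw [hxi, (this.1 hxi).symm]
    · have : ¬ y i = true := fun h => hxi (this.2 h)
      simp only [Bool.not_eq_true] at hxi this
      rw [hxi, this]
  · intro S hS
    refine ⟨fun i => decide (i ∈ S), ?_, ?_⟩
    · rw [mem_filter]; simp only [mem_filter, mem_univ, true_and, wt]
      rw [Finset.mem_powersetCard] at hS
      rw [← hS.2]
      congr 1
      ext i; simp
    · ext i; simp

lemma nat_main (m n w : ℕ) :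
    ∑ H : Fin m → Fin n → Bool, SSdist m n w H
      = n.choose w * (2 ^ n - w * 2 ^ (n - w)) ^ m := by
  have hd : ∀ H : Fin m → Fin n → Bool, SSdist m n w H
      = ∑ x : Fin n → Bool, if wt x = w ∧ ∀ i, ip (H i) x ≠ 1 then 1 else 0 := by
    intro H; rw [SSdist, Finset.card_filter]
  simp only [hd]
  rw [Finset.sum_comm]
  have step : ∀ x : Fin n → Bool,
      (∑ H : Fin m → Fin n → Bool, if wt x = w ∧ ∀ i, ip (H i) x ≠ 1 then 1 else 0)
        = if wt x = w then (2 ^ n - w * 2 ^ (n - w)) ^ m else 0 := by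
    intro x
    by_cases hx : wt x = w
    · simp only [hx, true_and, if_true]
      rw [← count_matrix x hx, Finset.card_filter]
    · simp [hx]
  rw [Finset.sum_congr rfl (fun x _ => step x), ← Finset.sum_filter]
  rw [Finset.sum_const, card_weight, smul_eq_mul]

theorem stmt2 (m n w : ℕ) (hw : w ≤ n) :
    (∑ H : Fin m → Fin n → Bool, (SSdist m n w H : ℝ)) / 2 ^ (m * n)
      = (n.choose w : ℝ) * (1 - (w : ℝ) * 2 ^ (-(w : ℝ))) ^ m := by
  have hle : w * 2 ^ (n - w) ≤ 2 ^ n := by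
    calc w * 2 ^ (n - w) ≤ 2 ^ w * 2 ^ (n - w) :=
          Nat.mul_le_mul_right _ (Nat.lt_two_pow_self).le
      _ = 2 ^ n := by rw [← pow_add, Nat.add_sub_cancel' hw]
  have hcast : (∑ H : Fin m → Fin n → Bool, (SSdist m n w H : ℝ))
      = ((∑ H : Fin m → Fin n → Bool, SSdist m n w H : ℕ) : ℝ) := by push_cast; rfl
  rw [hcast, nat_main]
  have hrpow : (2 : ℝ) ^ (-(w : ℝ)) = ((2 : ℝ) ^ w)⁻¹ := by
    rw [Real.rpow_neg (by norm_num), Real.rpow_natCast]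
  rw [hrpow]
  have hnw : (2 : ℝ) ^ (n - w) * (2 : ℝ) ^ w = 2 ^ n := by
    rw [← pow_add, Nat.sub_add_cancel hw]
  have key : (1 : ℝ) - (w : ℝ) * ((2 : ℝ) ^ w)⁻¹
      = ((2 ^ n - w * 2 ^ (n - w) : ℕ) : ℝ) / 2 ^ n := by
    rw [Nat.cast_sub hle]
    push_cast
    field_simp
    linear_combination (w : ℝ) * hnw
  rw [key]
  push_cast
  rw [div_pow, mul_div_assoc, ← pow_mul, mul_comm n m]
end

section
/- Fix a design rate R with 0 < R < 1 and a normalized weight ℓ with 0 < ℓ < 1. Then lim_{n→∞} (1/n) log₂ [ C(n, ⌊ℓn⌋) · (1 − ⌊ℓn⌋·2^{−⌊ℓn⌋})^{⌊(1−R)n⌋} ] = H(ℓ), where H is the binary entropy function H(x) = −x log₂ x − (1−x) log₂(1−x). -/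
open Filter

noncomputable def tterm (n k j : ℕ) : ℝ :=
  (n.choose j : ℝ) * ((k:ℝ)/n)^j * (1 - (k:ℝ)/n)^(n-j)

lemma tterm_nonneg {n k : ℕ} (hkn : k ≤ n) (j : ℕ) : 0 ≤ tterm n k j := by
  have h1 : (0:ℝ) ≤ (k:ℝ)/n := by positivity
  have h2 : (0:ℝ) ≤ 1 - (k:ℝ)/n := by
    rcases Nat.eq_zero_or_pos n with h | h
    · subst h; simp at hkn; simp [hkn]
    · have : (k:ℝ)/n ≤ 1 := by
        rw [div_le_one (by exact_mod_cast h)]; exact_mod_cast hkn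
      linarith
  unfold tterm; positivity

lemma tterm_succ_mul (n k j : ℕ) (hj : j < n) :
    tterm n k (j+1) * (((j:ℝ)+1) * (1 - (k:ℝ)/n)) = tterm n k j * (((n:ℝ)-j) * ((k:ℝ)/n)) := by
  have hcast : (n.choose (j+1) : ℝ) * ((j:ℝ)+1) = (n.choose j : ℝ) * ((n:ℝ) - (j:ℝ)) := by
    have h := Nat.choose_succ_right_eq n j
    have h2 : ((n - j : ℕ):ℝ) = (n:ℝ) - (j:ℝ) := by
      rw [Nat.cast_sub hj.le]
    calc (n.choose (j+1) : ℝ) * ((j:ℝ)+1) = ((n.choose (j+1) * (j+1) : ℕ) : ℝ) := by push_cast; ring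
      _ = ((n.choose j * (n - j) : ℕ) : ℝ) := by rw [h]
      _ = (n.choose j : ℝ) * ((n:ℝ) - (j:ℝ)) := by push_cast [Nat.cast_sub hj.le]; ring
  unfold tterm
  have e1 : n - j = (n - (j+1)) + 1 := by omega
  rw [e1, pow_succ]
  linear_combination (((k:ℝ)/n)^(j+1) * (1-(k:ℝ)/n)^(n-(j+1)) * (1-(k:ℝ)/n)) * hcast

lemma tterm_le_succ {n k : ℕ} (hkn : k < n) {j : ℕ} (hjk : j + 1 ≤ k) :
    tterm n k j ≤ tterm n k (j+1) := by
  have hj : j < n := by omega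
  have hn : (0:ℝ) < n := by exact_mod_cast Nat.pos_of_ne_zero (by omega)
  have hnp : (n:ℝ) * ((k:ℝ)/n) = k := by field_simp
  have hp0 : (0:ℝ) ≤ (k:ℝ)/n := by positivity
  have hq0 : (0:ℝ) < 1 - (k:ℝ)/n := by
    have : (k:ℝ)/n < 1 := by rw [div_lt_one hn]; exact_mod_cast hkn
    linarith
  have hid := tterm_succ_mul n k j hj
  have hjk' : (j:ℝ) + 1 ≤ k := by exact_mod_cast hjk
  have hBA : ((j:ℝ)+1) * (1 - (k:ℝ)/n) ≤ ((n:ℝ)-j) * ((k:ℝ)/n) := by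
    have key : ((n:ℝ)-j) * ((k:ℝ)/n) - ((j:ℝ)+1) * (1 - (k:ℝ)/n)
        = ((n:ℝ) * ((k:ℝ)/n)) + ((k:ℝ)/n) - ((j:ℝ)+1) := by ring
    nlinarith [key]
  have hA : (0:ℝ) < ((j:ℝ)+1) * (1 - (k:ℝ)/n) := by positivity
  have ht : 0 ≤ tterm n k j := tterm_nonneg hkn.le j
  nlinarith [hid, mul_le_mul_of_nonneg_left hBA ht]

lemma tterm_succ_le {n k : ℕ} (hkn : k < n) {j : ℕ} (hjk : k ≤ j) :
    tterm n k (j+1) ≤ tterm n k j := by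
  rcases lt_or_ge j n with hj | hj
  · have hn : (0:ℝ) < n := by exact_mod_cast Nat.pos_of_ne_zero (by omega)
    have hnp : (n:ℝ) * ((k:ℝ)/n) = k := by field_simp
    have hp0 : (0:ℝ) ≤ (k:ℝ)/n := by positivity
    have hp1 : (k:ℝ)/n < 1 := by rw [div_lt_one hn]; exact_mod_cast hkn
    have hq0 : (0:ℝ) < 1 - (k:ℝ)/n := by linarith
    have hid := tterm_succ_mul n k j hj
    have hjk' : (k:ℝ) ≤ j := by exact_mod_cast hjk
    have hAB : ((n:ℝ)-j) * ((k:ℝ)/n) ≤ ((j:ℝ)+1) * (1 - (k:ℝ)/n) := by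
      have key : ((j:ℝ)+1) * (1 - (k:ℝ)/n) - ((n:ℝ)-j) * ((k:ℝ)/n)
          = ((j:ℝ)+1) - ((n:ℝ) * ((k:ℝ)/n)) - ((k:ℝ)/n) := by ring
      nlinarith [key]
    have hA : (0:ℝ) < ((j:ℝ)+1) * (1 - (k:ℝ)/n) := by positivity
    have ht2 : 0 ≤ tterm n k j := tterm_nonneg hkn.le j
    nlinarith [hid, mul_le_mul_of_nonneg_left hAB ht2]
  · have : n.choose (j+1) = 0 := Nat.choose_eq_zero_of_lt (by omega)
    have h0 : tterm n k (j+1) = 0 := by unfold tterm; rw [this]; simp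
    rw [h0]; exact tterm_nonneg hkn.le j

lemma tterm_max {n k : ℕ} (hkn : k < n) (j : ℕ) : tterm n k j ≤ tterm n k k := by
  rcases le_or_gt j k with h | h
  · obtain ⟨d, hd⟩ := Nat.le.dest h
    clear h
    induction d generalizing j with
    | zero => simp at hd; subst hd; exact le_refl _
    | succ d ih =>
        exact le_trans (tterm_le_succ hkn (by omega)) (ih (j+1) (by omega))
  · obtain ⟨d, hd⟩ := Nat.le.dest h.le
    subst hd
    clear h
    induction d with
    | zero => exact le_refl _
    | succ d ih =>
        have : k + (d+1) = (k+d) + 1 := by omega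
        rw [this]
        exact le_trans (tterm_succ_le hkn (by omega)) ih

lemma tterm_sum (n k : ℕ) : ∑ j ∈ Finset.range (n+1), tterm n k j = 1 := by
  calc ∑ j ∈ Finset.range (n+1), tterm n k j
      = ∑ j ∈ Finset.range (n+1), ((k:ℝ)/n)^j * (1 - (k:ℝ)/n)^(n-j) * (n.choose j : ℝ) :=
        Finset.sum_congr rfl fun j _ => by unfold tterm; ring
    _ = ((k:ℝ)/n + (1 - (k:ℝ)/n))^n := (add_pow _ _ n).symm
    _ = 1 := by ring_nf

lemma tterm_ub {n k : ℕ} (hkn : k ≤ n) : tterm n k k ≤ 1 := by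
  rw [← tterm_sum n k]
  exact Finset.single_le_sum (fun j _ => tterm_nonneg hkn j)
    (Finset.mem_range.mpr (by omega))

lemma tterm_lb {n k : ℕ} (hkn : k < n) : 1 ≤ ((n:ℝ)+1) * tterm n k k := by
  have h := tterm_sum n k
  have h2 : ∑ j ∈ Finset.range (n+1), tterm n k j
      ≤ ∑ _j ∈ Finset.range (n+1), tterm n k k :=
    Finset.sum_le_sum fun j _ => tterm_max hkn j
  rw [h, Finset.sum_const, Finset.card_range] at h2
  calc (1:ℝ) ≤ (n+1) • tterm n k k := h2
    _ = ((n:ℝ)+1) * tterm n k k := by push_cast [nsmul_eq_mul]; ring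


/-- The binary entropy function. -/
noncomputable def binH (x : ℝ) : ℝ := -x * Real.logb 2 x - (1 - x) * Real.logb 2 (1 - x)

lemma choose_logb_bounds {n k : ℕ} (hk : 0 < k) (hkn : k < n) :
    binH ((k:ℝ)/n) - Real.logb 2 ((n:ℝ)+1) / n ≤ (1/(n:ℝ)) * Real.logb 2 (n.choose k) ∧
    (1/(n:ℝ)) * Real.logb 2 (n.choose k) ≤ binH ((k:ℝ)/n) := by
  have hn : (0:ℝ) < n := by exact_mod_cast Nat.pos_of_ne_zero (by omega)
  have hp0 : (0:ℝ) < (k:ℝ)/n := by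
    apply div_pos _ hn; exact_mod_cast hk
  have hp1 : (k:ℝ)/n < 1 := by rw [div_lt_one hn]; exact_mod_cast hkn
  have hq0 : (0:ℝ) < 1 - (k:ℝ)/n := by linarith
  have hc0 : (0:ℝ) < (n.choose k : ℝ) := by
    exact_mod_cast Nat.choose_pos hkn.le
  have hlog : Real.logb 2 (tterm n k k)
      = Real.logb 2 (n.choose k) + k * Real.logb 2 ((k:ℝ)/n)
        + ((n-k : ℕ):ℝ) * Real.logb 2 (1 - (k:ℝ)/n) := by
    unfold tterm
    rw [Real.logb_mul (by positivity) (by positivity),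
        Real.logb_mul (by positivity) (by positivity),
        Real.logb_pow, Real.logb_pow]
  have hnk : ((n-k : ℕ):ℝ) = (n:ℝ) - k := by rw [Nat.cast_sub hkn.le]
  have hfrac : ((n-k : ℕ):ℝ)/n = 1 - (k:ℝ)/n := by
    rw [hnk]; field_simp
  have hub : Real.logb 2 (tterm n k k) ≤ 0 :=
    Real.logb_nonpos one_lt_two (tterm_nonneg hkn.le k) (tterm_ub hkn.le)
  have hlb : -Real.logb 2 ((n:ℝ)+1) ≤ Real.logb 2 (tterm n k k) := by
    have h1 : 1/((n:ℝ)+1) ≤ tterm n k k := by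
      have := tterm_lb hkn
      rw [div_le_iff₀ (by positivity)]
      linarith [this]
    have h2 : Real.logb 2 (1/((n:ℝ)+1)) ≤ Real.logb 2 (tterm n k k) :=
      Real.logb_le_logb_of_le one_lt_two (by positivity) h1
    rwa [one_div, Real.logb_inv] at h2
  have key : (1/(n:ℝ)) * Real.logb 2 (n.choose k)
      = binH ((k:ℝ)/n) + (1/(n:ℝ)) * Real.logb 2 (tterm n k k) := by
    have : Real.logb 2 (n.choose k) = Real.logb 2 (tterm n k k)
        - k * Real.logb 2 ((k:ℝ)/n) - ((n-k : ℕ):ℝ) * Real.logb 2 (1 - (k:ℝ)/n) := by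
      linarith [hlog]
    rw [this, binH]
    have hkn' : (k:ℝ)/n = (k:ℝ)/n := rfl
    field_simp
    rw [hnk]
    ring
  constructor
  · rw [key]
    have e : (1/(n:ℝ)) * Real.logb 2 (tterm n k k) = Real.logb 2 (tterm n k k) / n := by ring
    have h : (-(Real.logb 2 ((n:ℝ)+1))) / n ≤ Real.logb 2 (tterm n k k) / n := by
      gcongr
    rw [e]
    have h2 : binH ((k:ℝ)/n) - Real.logb 2 ((n:ℝ)+1) / n
        = binH ((k:ℝ)/n) + (-(Real.logb 2 ((n:ℝ)+1))) / n := by ring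
    rw [h2]
    linarith
  · rw [key]
    have h := mul_nonpos_of_nonneg_of_nonpos (le_of_lt (one_div_pos.mpr hn)) hub
    linarith

lemma floor_div_tendsto {c : ℝ} (hc : 0 ≤ c) :
    Tendsto (fun n : ℕ => (⌊c * n⌋₊ : ℝ)/n) atTop (nhds c) := by
  apply tendsto_of_tendsto_of_tendsto_of_le_of_le'
    (g := fun n : ℕ => c - 1/(n:ℝ)) (h := fun _ => c)
  · simpa using (tendsto_const_nhds (x := c)).sub tendsto_one_div_atTop_nhds_zero_nat
  · exact tendsto_const_nhds
  · filter_upwards [eventually_ge_atTop 1] with n hn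
    have hn' : (0:ℝ) < n := by exact_mod_cast hn
    have h := Nat.sub_one_lt_floor (c * n)
    rw [le_div_iff₀ hn']
    have e : (c - 1/(n:ℝ)) * n = c * n - 1 := by field_simp
    linarith
  · filter_upwards [eventually_ge_atTop 1] with n hn
    have hn' : (0:ℝ) < n := by exact_mod_cast hn
    rw [div_le_iff₀ hn']
    have := Nat.floor_le (by positivity : (0:ℝ) ≤ c * n)
    linarith [this]

lemma logb_n_div_tendsto : Tendsto (fun n : ℕ => Real.logb 2 ((n:ℝ)+1) / n) atTop (nhds 0) := by
  have h1 : (fun n : ℕ => Real.log ((n:ℝ)+1)) =o[atTop] (fun n : ℕ => (n:ℝ)+1) :=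
    Real.isLittleO_log_id_atTop.comp_tendsto
      (tendsto_atTop_add_const_right atTop 1 tendsto_natCast_atTop_atTop)
  have h2 : (fun n : ℕ => (n:ℝ)+1) =O[atTop] (fun n : ℕ => (n:ℝ)) := by
    apply Asymptotics.IsBigO.of_bound 2
    filter_upwards [eventually_ge_atTop 1] with n hn
    have hn' : (1:ℝ) ≤ n := by exact_mod_cast hn
    rw [Real.norm_eq_abs, Real.norm_eq_abs, abs_of_nonneg (by linarith), abs_of_nonneg (by linarith)]
    linarith
  have h3 := (h1.trans_isBigO h2).tendsto_div_nhds_zero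
  have h4 : (fun n : ℕ => Real.logb 2 ((n:ℝ)+1) / n)
      = fun n : ℕ => (Real.log ((n:ℝ)+1) / n) * (1 / Real.log 2) := by
    funext n; rw [Real.logb]; ring
  rw [h4]
  simpa using h3.mul_const (1 / Real.log 2)

theorem stmt3 (R ℓ : ℝ) (hR0 : 0 < R) (hR1 : R < 1) (hl0 : 0 < ℓ) (hl1 : ℓ < 1) :
    Tendsto (fun n : ℕ =>
        (1 / (n : ℝ)) * Real.logb 2
          ((n.choose ⌊ℓ * n⌋₊ : ℝ)
            * (1 - (⌊ℓ * n⌋₊ : ℝ) * 2 ^ (-(⌊ℓ * n⌋₊ : ℝ))) ^ ⌊(1 - R) * n⌋₊))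
      atTop (nhds (binH ℓ)) := by
  set k : ℕ → ℕ := fun n => ⌊ℓ * n⌋₊ with hk
  set m : ℕ → ℕ := fun n => ⌊(1 - R) * n⌋₊ with hm
  -- k n tends to infinity
  have ktop : Tendsto k atTop atTop :=
    tendsto_nat_floor_atTop.comp (Tendsto.const_mul_atTop hl0 tendsto_natCast_atTop_atTop)
  have hev1 : ∀ᶠ n : ℕ in atTop, 1 ≤ k n := ktop.eventually_ge_atTop 1
  have hev2 : ∀ᶠ n : ℕ in atTop, k n < n := by
    filter_upwards [eventually_ge_atTop 1] with n hn
    have hn' : (0:ℝ) < n := by exact_mod_cast hn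
    exact Nat.floor_lt (by positivity) |>.mpr (by nlinarith)
  -- b n > 0 (the rpow factor)
  have hbpos : ∀ n : ℕ, (0:ℝ) < 1 - (k n : ℝ) * 2 ^ (-((k n : ℝ))) := by
    intro n
    have h2 : (2:ℝ) ^ (-((k n : ℝ))) = ((2:ℝ) ^ (k n))⁻¹ := by
      rw [Real.rpow_neg (by norm_num), Real.rpow_natCast]
    rw [h2]
    have hlt : (k n : ℝ) < 2 ^ (k n) := by exact_mod_cast Nat.lt_two_pow_self
    have hpow : (0:ℝ) < 2 ^ (k n) := by positivity
    have : (k n : ℝ) * ((2:ℝ) ^ (k n))⁻¹ < 1 := by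
      rw [← div_eq_mul_inv, div_lt_one hpow]; exact hlt
    linarith
  -- Part A
  have hcont : ContinuousAt binH ℓ := by
    have h1 : ContinuousAt (fun x : ℝ => -x * Real.logb 2 x) ℓ :=
      (continuousAt_id.neg.mul (Real.continuousAt_logb (ne_of_gt hl0)))
    have h2 : ContinuousAt (fun x : ℝ => (1 - x) * Real.logb 2 (1 - x)) ℓ := by
      have hc : ContinuousAt (fun x : ℝ => 1 - x) ℓ := continuousAt_const.sub continuousAt_id
      exact hc.mul ((Real.continuousAt_logb (sub_ne_zero_of_ne (ne_of_lt hl1).symm)).comp hc)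
    exact h1.sub h2
  have hHlim : Tendsto (fun n : ℕ => binH ((k n : ℝ)/n)) atTop (nhds (binH ℓ)) :=
    hcont.tendsto.comp (floor_div_tendsto hl0.le)
  have hA : Tendsto (fun n : ℕ => (1/(n:ℝ)) * Real.logb 2 (n.choose (k n))) atTop
      (nhds (binH ℓ)) := by
    apply tendsto_of_tendsto_of_tendsto_of_le_of_le'
      (g := fun n : ℕ => binH ((k n : ℝ)/n) - Real.logb 2 ((n:ℝ)+1) / n)
      (h := fun n : ℕ => binH ((k n : ℝ)/n))
    · simpa using hHlim.sub logb_n_div_tendsto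
    · exact hHlim
    · filter_upwards [hev1, hev2] with n h1 h2
      exact (choose_logb_bounds h1 h2).1
    · filter_upwards [hev1, hev2] with n h1 h2
      exact (choose_logb_bounds h1 h2).2
  -- Part B
  have hb1 : Tendsto (fun n : ℕ => (k n : ℝ) * 2 ^ (-((k n : ℝ)))) atTop (nhds 0) := by
    have base : Tendsto (fun j : ℕ => (j:ℝ)/2^j) atTop (nhds 0) := by
      have h := tendsto_pow_const_div_const_pow_of_one_lt 1 (by norm_num : (1:ℝ) < 2)
      simp only [pow_one] at h
      exact h
    have := base.comp ktop
    apply this.congr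
    intro n
    simp only [Function.comp]
    rw [Real.rpow_neg (by norm_num), Real.rpow_natCast, div_eq_mul_inv]
  have hb2 : Tendsto (fun n : ℕ => Real.logb 2 (1 - (k n : ℝ) * 2 ^ (-((k n : ℝ)))))
      atTop (nhds 0) := by
    have hc : ContinuousAt (Real.logb 2) 1 := Real.continuousAt_logb one_ne_zero
    have h15 : Tendsto (fun n : ℕ => 1 - (k n : ℝ) * 2 ^ (-((k n : ℝ)))) atTop (nhds 1) := by
      have := (tendsto_const_nhds (x := (1:ℝ)) (f := (atTop : Filter ℕ))).sub hb1
      simpa using this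
    have := hc.tendsto.comp h15
    simpa [Function.comp_def] using this
  have hB : Tendsto (fun n : ℕ =>
      ((m n : ℝ)/n) * Real.logb 2 (1 - (k n : ℝ) * 2 ^ (-((k n : ℝ))))) atTop (nhds 0) := by
    have habs : Tendsto (fun n : ℕ => |Real.logb 2 (1 - (k n : ℝ) * 2 ^ (-((k n : ℝ))))|)
        atTop (nhds 0) := by simpa using hb2.abs
    apply squeeze_zero_norm' ?_ habs
    · filter_upwards [eventually_ge_atTop 1] with n hn
      have hn' : (0:ℝ) < n := by exact_mod_cast hn
      have hmn : (m n : ℝ) ≤ n := by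
        have h1 : (m n : ℝ) ≤ (1-R) * n := Nat.floor_le (mul_nonneg (by linarith) hn'.le)
        nlinarith
      have hdiv : (0:ℝ) ≤ (m n : ℝ)/n := by positivity
      have hdiv1 : (m n : ℝ)/n ≤ 1 := by rw [div_le_one hn']; exact hmn
      rw [norm_mul, Real.norm_eq_abs, Real.norm_eq_abs, abs_of_nonneg hdiv]
      calc (m n : ℝ)/n * |Real.logb 2 (1 - (k n : ℝ) * 2 ^ (-((k n : ℝ))))|
          ≤ 1 * |Real.logb 2 (1 - (k n : ℝ) * 2 ^ (-((k n : ℝ))))| := by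
            apply mul_le_mul_of_nonneg_right hdiv1 (abs_nonneg _)
        _ = _ := one_mul _
  -- combine
  have hsum := hA.add hB
  rw [add_zero] at hsum
  apply hsum.congr'
  filter_upwards [hev1, hev2] with n h1 h2
  have hc0 : (n.choose (k n) : ℝ) ≠ 0 := by
    have : 0 < n.choose (k n) := Nat.choose_pos h2.le
    exact_mod_cast this.ne'
  have hb0 : (1 - (k n : ℝ) * 2 ^ (-((k n : ℝ)))) ^ (m n) ≠ 0 :=
    pow_ne_zero _ (ne_of_gt (hbpos n))
  rw [Real.logb_mul hc0 hb0, Real.logb_pow]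
  ring
end

section
/- Let x_w ∈ {0,1}^n have weight w ≥ 1. Define U = #{(h₁,h₂) ∈ ({0,1}^n)² : h₁∘x_w ≠ 1, h₂∘x_w ≠ 1, (h₁⊕h₂)∘x_w ≠ 1}, where ∘ is the integer inner product and ⊕ is coordinatewise XOR. Then U = (2^n − w·2^{n−w})² − 2^{2(n−w)+1}·Σ_{γ=2}^{w} C(w,γ)·(w−γ). -/
open Finset

lemma sum_xor_reindex {n : ℕ} (h1 : Fin n → Bool) (F : (Fin n → Bool) → ℤ) :
    ∑ h2 : Fin n → Bool, F (fun i => xor (h1 i) (h2 i)) = ∑ g, F g := by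
  have hinv : Function.Involutive (fun g : Fin n → Bool => fun i => xor (h1 i) (g i)) := by
    intro g; funext i; simp
  exact hinv.bijective.sum_comp F

lemma ip_xor_ne {n : ℕ} (h1 h2 x : Fin n → Bool) (ha : ip h1 x = 1) (hb : ip h2 x = 1) :
    ip (fun i => xor (h1 i) (h2 i)) x ≠ 1 := by
  have key : ip (fun i => xor (h1 i) (h2 i)) x + 2 * (∑ i, if h1 i ∧ h2 i ∧ x i then 1 else 0)
      = ip h1 x + ip h2 x := by
    unfold ip
    rw [Finset.mul_sum, ← Finset.sum_add_distrib, ← Finset.sum_add_distrib]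
    apply Finset.sum_congr rfl
    intro i _
    rcases e1 : h1 i <;> rcases e2 : h2 i <;> rcases e3 : x i <;> simp [e1, e2, e3]
  omega

lemma count_singletons (α : Type*) [Fintype α] [DecidableEq α] :
    (univ.filter fun f : α → Bool => (∑ i, if f i then (1:ℕ) else 0) = 1).card
      = Fintype.card α := by
  rw [← Finset.card_univ (α := α)]
  symm
  apply Finset.card_bij (fun (a : α) _ => fun j => decide (j = a))
  · intro a _
    simp [Finset.filter_eq']
  · intro a1 _ a2 _ h
    have := congrFun h a1
    simpa using this
  · intro f hf
    simp only [mem_filter, mem_univ, true_and] at hf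
    have hcard : (univ.filter fun j => f j = true).card = 1 := by
      rw [Finset.card_filter]
      simpa using hf
    obtain ⟨a, ha⟩ := Finset.card_eq_one.mp hcard
    refine ⟨a, mem_univ a, ?_⟩
    funext j
    have hj : f j = true ↔ j = a := by
      constructor
      · intro h
        have : j ∈ ({a} : Finset α) := ha ▸ (by simp [h])
        simpa using this
      · intro h
        subst h
        have : j ∈ univ.filter fun k => f k = true := ha ▸ (by simp)
        simpa using this
    by_cases hja : j = a
    · subst hja; simp [hj.mpr rfl]
    · have hfj : f j = false := by
        cases hfj : f j
        · rfl
        · exact absurd (hj.mp hfj) hja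
      simp [hja, hfj]

lemma sum_ip_one {n : ℕ} (x : Fin n → Bool) :
    (∑ h : Fin n → Bool, if ip h x = 1 then (1:ℤ) else 0)
      = (wt x : ℤ) * 2 ^ (n - wt x) := by
  classical
  have hip : ∀ h : Fin n → Bool,
      ip h x = ∑ i : {i // x i = true}, (if h i.1 then 1 else 0) := by
    intro h
    unfold ip
    rw [← Finset.sum_subtype (univ.filter fun i => x i = true) (by simp)
      (fun i => if h i then (1:ℕ) else 0), Finset.sum_filter]
    apply Finset.sum_congr rfl
    intro i _
    by_cases hx : x i = true <;> by_cases hh : h i = true <;> simp [hx, hh]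
  set e := (Equiv.piEquivPiSubtypeProd (fun i : Fin n => x i = true) (fun _ => Bool)).symm
    with he
  rw [← Equiv.sum_comp e, Fintype.sum_prod_type]
  have hval : ∀ (u : {i // x i = true} → Bool) (v : {i // ¬ x i = true} → Bool),
      ip (e (u, v)) x = ∑ i, if u i then 1 else 0 := by
    intro u v
    rw [hip]
    apply Finset.sum_congr rfl
    intro i _
    have : (e (u, v)) i.1 = u i := by
      simp [he, Equiv.piEquivPiSubtypeProd, i.2]
    rw [this]
  simp only [hval]
  rw [Finset.sum_congr rfl (fun u _ => Finset.sum_const _)]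
  simp only [card_univ]
  have hc1 : Fintype.card ({i // ¬ x i = true} → Bool) = 2 ^ (n - wt x) := by
    rw [Fintype.card_fun, Fintype.card_bool, Fintype.card_subtype_compl,
      Fintype.card_fin, Fintype.card_subtype]
    rfl
  have hc2 : (∑ u : {i // x i = true} → Bool,
      if (∑ i, if u i then (1:ℕ) else 0) = 1 then (1:ℤ) else 0) = (wt x : ℤ) := by
    rw [Finset.sum_boole]
    rw [count_singletons]
    rw [Fintype.card_subtype]
    rfl
  simp only [nsmul_eq_mul, hc1]
  rw [← Finset.mul_sum, hc2]
  push_cast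
  ring

lemma nat_sum_id_mul_choose (m : ℕ) :
    ∑ γ ∈ Finset.range (m + 2), γ * (m + 1).choose γ = (m + 1) * 2 ^ m := by
  rw [Finset.sum_range_succ']
  simp only [Nat.zero_mul, add_zero]
  have key : ∀ i, (i + 1) * (m + 1).choose (i + 1) = (m + 1) * m.choose i := by
    intro i
    rw [mul_comm, ← Nat.add_one_mul_choose_eq]
  rw [Finset.sum_congr rfl fun i _ => key i, ← Finset.mul_sum, Nat.sum_range_choose]

lemma sum_Icc_choose (w : ℕ) (hw : 1 ≤ w) :
    ∑ γ ∈ Finset.Icc 2 w, (w.choose γ : ℤ) * ((w : ℤ) - γ)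
      = (w : ℤ) * 2 ^ (w - 1) - (w : ℤ) ^ 2 := by
  obtain ⟨m, rfl⟩ : ∃ m, w = m + 1 := ⟨w - 1, by omega⟩
  have hins : Finset.range (m + 2) = insert 0 (insert 1 (Finset.Icc 2 (m + 1))) := by
    ext a
    simp only [Finset.mem_range, Finset.mem_insert, Finset.mem_Icc]
    omega
  have hfull : ∑ γ ∈ Finset.range (m + 2), ((m + 1).choose γ : ℤ) * (((m : ℤ) + 1) - γ)
      = ((m : ℤ) + 1) * 2 ^ m := by
    have e1 : (∑ γ ∈ Finset.range (m + 2), ((m + 1).choose γ : ℤ)) = 2 ^ (m + 1) := by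
      exact_mod_cast congrArg (Nat.cast (R := ℤ)) (Nat.sum_range_choose (m + 1))
    have e2 : (∑ γ ∈ Finset.range (m + 2), ((m + 1).choose γ : ℤ) * (γ : ℤ))
        = ((m : ℤ) + 1) * 2 ^ m := by
      have h := congrArg (Nat.cast (R := ℤ)) (nat_sum_id_mul_choose m)
      push_cast at h
      rw [← h]
      apply Finset.sum_congr rfl
      intro i _
      ring
    have expand : ∀ γ ∈ Finset.range (m + 2),
        ((m + 1).choose γ : ℤ) * (((m : ℤ) + 1) - γ)
          = ((m + 1).choose γ : ℤ) * ((m : ℤ) + 1) - ((m + 1).choose γ : ℤ) * (γ : ℤ) := by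
      intro γ _; ring
    rw [Finset.sum_congr rfl expand, Finset.sum_sub_distrib, e2, ← Finset.sum_mul, e1]
    ring
  rw [hins] at hfull
  rw [Finset.sum_insert (by simp), Finset.sum_insert (by simp)] at hfull
  simp only [Nat.choose_zero_right, Nat.choose_one_right, Nat.cast_zero, Nat.cast_one,
    Nat.cast_ofNat, Nat.cast_add] at hfull
  have hfin : ∑ γ ∈ Finset.Icc 2 (m + 1), ((m + 1).choose γ : ℤ) * (((m : ℤ) + 1) - γ)
      = ((m : ℤ) + 1) * 2 ^ m - ((m : ℤ) + 1) - ((m : ℤ) + 1) * ((m : ℤ) + 1 - 1) := by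
    linarith [hfull]
  simp only [Nat.add_sub_cancel]
  push_cast
  rw [show ∑ γ ∈ Finset.Icc 2 (m + 1), ((m + 1).choose γ : ℤ) * (((m : ℤ) + 1) - γ)
      = ((m : ℤ) + 1) * 2 ^ m - ((m : ℤ) + 1) - ((m : ℤ) + 1) * ((m : ℤ) + 1 - 1) from hfin]
  ring

theorem stmt9 (n w : ℕ) (hw1 : 1 ≤ w) (hwn : w ≤ n) (x : Fin n → Bool) (hx : wt x = w) :
    ((Finset.univ.filter fun p : (Fin n → Bool) × (Fin n → Bool) =>
        ip p.1 x ≠ 1 ∧ ip p.2 x ≠ 1 ∧ ip (fun i => xor (p.1 i) (p.2 i)) x ≠ 1).card : ℤ)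
      = ((2 : ℤ) ^ n - (w : ℤ) * 2 ^ (n - w)) ^ 2
        - 2 ^ (2 * (n - w) + 1) * ∑ γ ∈ Finset.Icc 2 w, (w.choose γ : ℤ) * ((w : ℤ) - γ) := by
  classical
  set a : (Fin n → Bool) → ℤ := fun h => if ip h x = 1 then 1 else 0 with haa
  set K : ℤ := (w : ℤ) * 2 ^ (n - w) with hKdef
  have hsum1 : (∑ h : Fin n → Bool, a h) = K := by
    rw [haa, sum_ip_one, hx]
  have hNcard : Fintype.card (Fin n → Bool) = 2 ^ n := by
    rw [Fintype.card_fun, Fintype.card_bool, Fintype.card_fin]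
  have hsum : ((Finset.univ.filter fun p : (Fin n → Bool) × (Fin n → Bool) =>
        ip p.1 x ≠ 1 ∧ ip p.2 x ≠ 1 ∧ ip (fun i => xor (p.1 i) (p.2 i)) x ≠ 1).card : ℤ)
      = ∑ p : (Fin n → Bool) × (Fin n → Bool),
          (1 - a p.1 - a p.2 - a (fun i => xor (p.1 i) (p.2 i))
            + a p.1 * a p.2 + a p.1 * a (fun i => xor (p.1 i) (p.2 i))
            + a p.2 * a (fun i => xor (p.1 i) (p.2 i))
            - a p.1 * a p.2 * a (fun i => xor (p.1 i) (p.2 i))) := by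
    rw [← Finset.sum_boole]
    apply Finset.sum_congr rfl
    intro p _
    by_cases h1 : ip p.1 x = 1 <;> by_cases h2 : ip p.2 x = 1 <;>
      by_cases h3 : ip (fun i => xor (p.1 i) (p.2 i)) x = 1 <;>
      simp [haa, h1, h2, h3]
  have S1 : (∑ _p : (Fin n → Bool) × (Fin n → Bool), (1 : ℤ)) = 2 ^ n * 2 ^ n := by
    rw [Finset.sum_const, card_univ, Fintype.card_prod, hNcard]
    push_cast
    ring
  have SA : (∑ p : (Fin n → Bool) × (Fin n → Bool), a p.1) = 2 ^ n * K := by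
    rw [Fintype.sum_prod_type]
    simp only [Finset.sum_const, card_univ, hNcard, nsmul_eq_mul]
    rw [← Finset.mul_sum]
    · push_cast
      rw [hsum1]
  have SB : (∑ p : (Fin n → Bool) × (Fin n → Bool), a p.2) = 2 ^ n * K := by
    rw [Fintype.sum_prod_type]
    rw [Finset.sum_congr rfl fun h1 _ => hsum1]
    rw [Finset.sum_const, card_univ, hNcard]
    push_cast
    ring
  have SC : (∑ p : (Fin n → Bool) × (Fin n → Bool),
      a (fun i => xor (p.1 i) (p.2 i))) = 2 ^ n * K := by
    rw [Fintype.sum_prod_type]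
    rw [Finset.sum_congr rfl fun h1 _ => (sum_xor_reindex h1 a).trans hsum1]
    rw [Finset.sum_const, card_univ, hNcard]
    push_cast
    ring
  have SAB : (∑ p : (Fin n → Bool) × (Fin n → Bool), a p.1 * a p.2) = K * K := by
    rw [Fintype.sum_prod_type]
    rw [Finset.sum_congr rfl fun h1 _ => (Finset.mul_sum _ _ _).symm]
    rw [Finset.sum_congr rfl fun h1 _ => by rw [hsum1]]
    rw [← Finset.sum_mul, hsum1]
  have SAC : (∑ p : (Fin n → Bool) × (Fin n → Bool),
      a p.1 * a (fun i => xor (p.1 i) (p.2 i))) = K * K := by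
    rw [Fintype.sum_prod_type]
    rw [Finset.sum_congr rfl fun h1 _ => (Finset.mul_sum _ _ _).symm]
    rw [Finset.sum_congr rfl fun h1 _ => by rw [(sum_xor_reindex h1 a).trans hsum1]]
    rw [← Finset.sum_mul, hsum1]
  have hxorcomm : ∀ h1 h2 : Fin n → Bool,
      (fun i => xor (h1 i) (h2 i)) = (fun i => xor (h2 i) (h1 i)) := by
    intro h1 h2; funext i; exact Bool.xor_comm _ _
  have SBC : (∑ p : (Fin n → Bool) × (Fin n → Bool),
      a p.2 * a (fun i => xor (p.1 i) (p.2 i))) = K * K := by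
    rw [Fintype.sum_prod_type_right]
    rw [Finset.sum_congr rfl fun h2 _ => (Finset.mul_sum _ _ _).symm]
    have inner : ∀ h2 : Fin n → Bool,
        (∑ h1 : Fin n → Bool, a fun i => xor (h1 i) (h2 i)) = K := by
      intro h2
      have step : (∑ h1 : Fin n → Bool, a fun i => xor (h1 i) (h2 i))
          = ∑ h1 : Fin n → Bool, a fun i => xor (h2 i) (h1 i) :=
        Finset.sum_congr rfl fun h1 _ => by rw [hxorcomm h1 h2]
      rw [step]
      exact (sum_xor_reindex h2 a).trans hsum1
    rw [Finset.sum_congr rfl fun h2 _ => by rw [inner h2]]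
    rw [← Finset.sum_mul, hsum1]
  have SABC : (∑ p : (Fin n → Bool) × (Fin n → Bool),
      a p.1 * a p.2 * a (fun i => xor (p.1 i) (p.2 i))) = 0 := by
    apply Finset.sum_eq_zero
    intro p _
    by_cases h1 : ip p.1 x = 1
    · by_cases h2 : ip p.2 x = 1
      · have := ip_xor_ne p.1 p.2 x h1 h2
        simp [haa, this]
      · simp [haa, h2]
    · simp [haa, h1]
  rw [hsum]
  simp only [Finset.sum_add_distrib, Finset.sum_sub_distrib]
  rw [S1, SA, SB, SC, SAB, SAC, SBC, SABC]
  rw [sum_Icc_choose w hw1]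
  obtain ⟨A, rfl⟩ : ∃ A, n = A + w := ⟨n - w, by omega⟩
  obtain ⟨M, rfl⟩ : ∃ M, w = M + 1 := ⟨w - 1, by omega⟩
  rw [hKdef]
  simp only [Nat.add_sub_cancel]
  push_cast
  ring
end

section
/- Let V = #{(h₁,h₂) ∈ ({0,1}^n)² : h₁∘x_w ≠ 1, h₂∘x_w ≠ 1, (h₁⊕h₂)∘x_w = 1}, where x_w has weight w ≥ 1 and ∘ is the integer inner product, ⊕ is coordinatewise XOR. Then V = 2^{2(n−w)+1}·Σ_{γ=2}^{w} C(w,γ)·(w−γ). -/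
open Finset

lemma fiber_card_aux {n : ℕ} (S a : Finset (Fin n)) (ha : a ⊆ S) :
    (Finset.univ.filter fun h : Fin n → Bool =>
        S.filter (fun i => h i = true) = a).card = 2 ^ (n - S.card) := by
  classical
  rw [← Fintype.card_subtype]
  have e : {h : Fin n → Bool // S.filter (fun i => h i = true) = a} ≃
      ({i : Fin n // i ∉ S} → Bool) :=
    { toFun := fun h i => h.1 i.1
      invFun := fun v => ⟨fun i => if hi : i ∈ S then decide (i ∈ a) else v ⟨i, hi⟩, by
        ext k
        by_cases hk : k ∈ S
        · simp only [Finset.mem_filter, hk, dif_pos, true_and, decide_eq_true_eq]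
        · simp only [Finset.mem_filter, hk, false_and, false_iff]
          exact fun hk' => hk (ha hk')⟩
      left_inv := by
        rintro ⟨h, hh⟩
        apply Subtype.ext
        funext i
        by_cases hi : i ∈ S
        · simp only [dif_pos hi]
          have h2 : i ∈ a ↔ h i = true := by
            rw [← hh]; simp [Finset.mem_filter, hi]
          simp [h2]
        · simp [dif_neg hi]
      right_inv := by
        intro v
        funext i
        simp [dif_neg i.2] }
  rw [Fintype.card_congr e, Fintype.card_fun]
  congr 1
  rw [Fintype.card_subtype_compl, Fintype.card_coe, Fintype.card_fin]

lemma inner_count_aux {n : ℕ} (S a : Finset (Fin n)) (ha : a ⊆ S) :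
    (S.filter fun j => a.card ≠ 1 ∧ (symmDiff a {j}).card ≠ 1).card =
      (if a.card = 0 ∨ a.card = 1 then 0 else if a.card = 2 then S.card - 2 else S.card) := by
  classical
  have hmem : ∀ j ∈ a, symmDiff a {j} = a.erase j := by
    intro j hj
    ext k
    simp only [Finset.mem_symmDiff, Finset.mem_singleton, Finset.mem_erase]
    constructor
    · rintro (⟨h1, h2⟩ | ⟨rfl, h2⟩)
      · exact ⟨h2, h1⟩
      · exact absurd hj h2
    · rintro ⟨h1, h2⟩; exact Or.inl ⟨h2, h1⟩
  have hnmem : ∀ j ∉ a, symmDiff a {j} = insert j a := by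
    intro j hj
    ext k
    simp only [Finset.mem_symmDiff, Finset.mem_singleton, Finset.mem_insert]
    constructor
    · rintro (⟨h1, h2⟩ | ⟨rfl, h2⟩)
      · exact Or.inr h1
      · exact Or.inl rfl
    · rintro (rfl | h1)
      · exact Or.inr ⟨rfl, hj⟩
      · refine Or.inl ⟨h1, ?_⟩
        rintro rfl; exact hj h1
  have hcard : ∀ j, (symmDiff a {j}).card = if j ∈ a then a.card - 1 else a.card + 1 := by
    intro j
    by_cases hj : j ∈ a
    · rw [if_pos hj, hmem j hj, Finset.card_erase_of_mem hj]
    · rw [if_neg hj, hnmem j hj, Finset.card_insert_of_notMem hj]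
  by_cases h1 : a.card = 1
  · simp [h1]
  by_cases h0 : a.card = 0
  · rw [if_pos (Or.inl h0)]
    rw [Finset.card_eq_zero] at h0
    subst h0
    convert Finset.card_empty
    rw [Finset.filter_false_of_mem]
    intro j _
    simp [hcard j]
  by_cases h2 : a.card = 2
  · rw [if_neg (by omega), if_pos h2]
    have : (S.filter fun j => a.card ≠ 1 ∧ (symmDiff a {j}).card ≠ 1) = S \ a := by
      ext j
      simp only [Finset.mem_filter, Finset.mem_sdiff, hcard j]
      by_cases hj : j ∈ a <;> simp [hj, h2] <;> omega
    rw [this, Finset.card_sdiff_of_subset ha, h2]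
  · rw [if_neg (by omega), if_neg h2]
    rw [Finset.filter_true_of_mem]
    intro j _
    refine ⟨h1, ?_⟩
    rw [hcard j]
    by_cases hj : j ∈ a
    · rw [if_pos hj]; omega
    · rw [if_neg hj]; omega


def gfun (w γ : ℕ) : ℕ := if γ = 0 ∨ γ = 1 then 0 else if γ = 2 then w - 2 else w

lemma two_choose_aux (w : ℕ) : 2 * w.choose 2 = w * (w - 1) := by
  induction w with
  | zero => rfl
  | succ m ih =>
    cases m with
    | zero => rfl
    | succ k =>
      rw [Nat.choose_succ_succ, Nat.mul_add, ih, Nat.choose_one_right]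
      simp only [Nat.add_sub_cancel]
      ring

lemma sum_mul_choose_aux (w : ℕ) :
    ∑ γ ∈ Finset.range (w + 1), γ * w.choose γ = w * 2 ^ (w - 1) := by
  cases w with
  | zero => simp
  | succ m =>
    rw [Finset.sum_range_succ']
    simp only [Nat.zero_mul, Nat.add_zero, Nat.add_sub_cancel]
    have h : ∀ γ, (γ + 1) * (m + 1).choose (γ + 1) = (m + 1) * m.choose γ := by
      intro γ
      rw [mul_comm, Nat.add_one_mul_choose_eq]
    calc ∑ γ ∈ Finset.range (m + 1), (γ + 1) * (m + 1).choose (γ + 1)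
        = ∑ γ ∈ Finset.range (m + 1), (m + 1) * m.choose γ :=
          Finset.sum_congr rfl fun γ _ => h γ
      _ = (m + 1) * 2 ^ m := by rw [← Finset.mul_sum, Nat.sum_range_choose]

lemma key_aux (w : ℕ) (hw : 1 ≤ w) :
    (∑ γ ∈ Finset.range (w + 1), (w.choose γ : ℤ) * (gfun w γ : ℤ)) =
      2 * ∑ γ ∈ Finset.Icc 2 w, (w.choose γ : ℤ) * ((w : ℤ) - γ) := by
  rcases Nat.lt_or_ge w 2 with hw2 | hw2
  · interval_cases w
    simp [gfun, Finset.sum_range_succ]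
  -- now 2 ≤ w
  have hsplit : ∀ f : ℕ → ℤ, ∑ γ ∈ Finset.range (w + 1), f γ
      = f 0 + f 1 + f 2 + ∑ γ ∈ Finset.Icc 3 w, f γ := by
    intro f
    rw [Finset.range_eq_Ico, ← Finset.sum_Ico_consecutive f (Nat.zero_le 3) (by omega),
      Finset.Ico_add_one_right_eq_Icc,
      (by decide : Finset.Ico 0 3 = ({0, 1, 2} : Finset ℕ))]
    simp [Finset.sum_insert, Finset.sum_pair]
    ring
  have hsplitR : ∀ f : ℕ → ℤ, ∑ γ ∈ Finset.Icc 2 w, f γ = f 2 + ∑ γ ∈ Finset.Icc 3 w, f γ := by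
    intro f
    have h : Finset.Icc 2 w = insert 2 (Finset.Icc 3 w) := by
      ext γ
      simp only [Finset.mem_Icc, Finset.mem_insert]
      omega
    rw [h, Finset.sum_insert (by simp [Finset.mem_Icc])]
  set X : ℤ := ∑ γ ∈ Finset.Icc 3 w, (w.choose γ : ℤ) with hX
  set Y : ℤ := ∑ γ ∈ Finset.Icc 3 w, (γ : ℤ) * (w.choose γ : ℤ) with hY
  set P : ℤ := 2 ^ (w - 1) with hP
  have e1 : 1 + (w : ℤ) + (w.choose 2 : ℤ) + X = 2 * P := by
    have h := Nat.sum_range_choose w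
    have h' : (∑ γ ∈ Finset.range (w + 1), (w.choose γ : ℤ)) = 2 ^ w := by
      exact_mod_cast congrArg (Nat.cast : ℕ → ℤ) h
    rw [hsplit] at h'
    have hpow : (2 : ℤ) ^ w = 2 * P := by
      rw [hP, ← pow_succ']
      congr 1
      omega
    rw [hpow] at h'
    simpa [Nat.choose_one_right] using h'
  have e2 : (w : ℤ) + 2 * (w.choose 2 : ℤ) + Y = (w : ℤ) * P := by
    have h := sum_mul_choose_aux w
    have h' : (∑ γ ∈ Finset.range (w + 1), (γ : ℤ) * (w.choose γ : ℤ)) = (w : ℤ) * P := by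
      rw [hP]
      exact_mod_cast congrArg (Nat.cast : ℕ → ℤ) h
    rw [hsplit] at h'
    simpa [Nat.choose_one_right] using h'
  have e3 : 2 * (w.choose 2 : ℤ) = (w : ℤ) * ((w : ℤ) - 1) := by
    have h := two_choose_aux w
    have h2 : ((2 * w.choose 2 : ℕ) : ℤ) = ((w * (w - 1) : ℕ) : ℤ) := by rw [h]
    push_cast [Nat.cast_sub hw] at h2
    linarith
  have hL : (∑ γ ∈ Finset.range (w + 1), (w.choose γ : ℤ) * (gfun w γ : ℤ))
      = (w.choose 2 : ℤ) * ((w : ℤ) - 2) + (w : ℤ) * X := by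
    rw [hsplit]
    have hg0 : gfun w 0 = 0 := rfl
    have hg1 : gfun w 1 = 0 := rfl
    have hg2 : (gfun w 2 : ℤ) = (w : ℤ) - 2 := by
      simp only [gfun]
      norm_num
      push_cast [Nat.cast_sub hw2]
      ring
    have hrest : ∑ γ ∈ Finset.Icc 3 w, (w.choose γ : ℤ) * (gfun w γ : ℤ)
        = (w : ℤ) * X := by
      rw [hX, Finset.mul_sum]
      apply Finset.sum_congr rfl
      intro γ hγ
      rw [Finset.mem_Icc] at hγ
      have : gfun w γ = w := by
        simp only [gfun]
        rw [if_neg (by omega), if_neg (by omega)]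
      rw [this]
      ring
    rw [hg0, hg1, hg2, hrest]
    push_cast
    ring
  have hR : (∑ γ ∈ Finset.Icc 2 w, (w.choose γ : ℤ) * ((w : ℤ) - γ))
      = (w.choose 2 : ℤ) * ((w : ℤ) - 2) + ((w : ℤ) * X - Y) := by
    rw [hsplitR]
    have : ∑ γ ∈ Finset.Icc 3 w, (w.choose γ : ℤ) * ((w : ℤ) - γ)
        = (w : ℤ) * X - Y := by
      rw [hX, hY, Finset.mul_sum, ← Finset.sum_sub_distrib]
      apply Finset.sum_congr rfl
      intro γ _
      ring
    rw [this]
    push_cast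
    ring
  rw [hL, hR]
  linear_combination 2 * e2 - (w : ℤ) * e1 - e3


theorem stmt10 (n w : ℕ) (hw1 : 1 ≤ w) (hwn : w ≤ n) (x : Fin n → Bool) (hx : wt x = w) :
    ((Finset.univ.filter fun p : (Fin n → Bool) × (Fin n → Bool) =>
        ip p.1 x ≠ 1 ∧ ip p.2 x ≠ 1 ∧ ip (fun i => xor (p.1 i) (p.2 i)) x = 1).card : ℤ)
      = 2 ^ (2 * (n - w) + 1) * ∑ γ ∈ Finset.Icc 2 w, (w.choose γ : ℤ) * ((w : ℤ) - γ) := by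
  classical
  set S : Finset (Fin n) := Finset.univ.filter fun i => x i = true with hS
  have hScard : S.card = w := hx
  set F : (Fin n → Bool) → Finset (Fin n) := fun h => S.filter fun i => h i = true with hF
  have hip : ∀ h : Fin n → Bool, ip h x = (F h).card := by
    intro h
    rw [hF]
    simp only [hS, Finset.filter_filter, ip, Finset.card_filter]
    apply Finset.sum_congr rfl
    intro i _
    by_cases h1 : h i <;> by_cases h2 : x i <;> simp [h1, h2]
  have hxor : ∀ h₁ h₂ : Fin n → Bool, F (fun i => xor (h₁ i) (h₂ i)) = symmDiff (F h₁) (F h₂) := by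
    intro h₁ h₂
    ext i
    simp only [hF, Finset.mem_symmDiff, Finset.mem_filter]
    by_cases h1 : h₁ i <;> by_cases h2 : h₂ i <;> simp [h1, h2] <;> tauto
  set A : Finset ((Fin n → Bool) × (Fin n → Bool)) :=
    Finset.univ.filter fun p =>
      ip p.1 x ≠ 1 ∧ ip p.2 x ≠ 1 ∧ ip (fun i => xor (p.1 i) (p.2 i)) x = 1 with hA
  set T : Finset (Finset (Fin n) × Finset (Fin n)) :=
    (S.powerset ×ˢ S.powerset).filter fun q =>
      q.1.card ≠ 1 ∧ q.2.card ≠ 1 ∧ (symmDiff q.1 q.2).card = 1 with hT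
  have hmaps : ∀ p ∈ A, (F p.1, F p.2) ∈ T := by
    intro p hp
    rw [hA, Finset.mem_filter] at hp
    rw [hT, Finset.mem_filter, Finset.mem_product]
    refine ⟨⟨Finset.mem_powerset.2 (Finset.filter_subset _ _),
      Finset.mem_powerset.2 (Finset.filter_subset _ _)⟩, ?_, ?_, ?_⟩
    · rw [← hip p.1]; exact hp.2.1
    · rw [← hip p.2]; exact hp.2.2.1
    · rw [← hxor p.1 p.2, ← hip _]; exact hp.2.2.2
  have hAcard : A.card = T.card * (2 ^ (n - w) * 2 ^ (n - w)) := by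
    rw [Finset.card_eq_sum_card_fiberwise hmaps]
    rw [Finset.sum_congr rfl (fun q hq => ?_), Finset.sum_const, smul_eq_mul]
    -- fiber card
    have hq' := hq
    rw [hT, Finset.mem_filter, Finset.mem_product] at hq'
    obtain ⟨⟨hq1, hq2⟩, hc1, hc2, hc3⟩ := hq'
    have : A.filter (fun p => (F p.1, F p.2) = q)
        = Finset.univ.filter fun p : (Fin n → Bool) × (Fin n → Bool) =>
            F p.1 = q.1 ∧ F p.2 = q.2 := by
      ext p
      rw [Finset.mem_filter, hA, Finset.mem_filter, Finset.mem_filter]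
      constructor
      · rintro ⟨⟨h1, h2⟩, h3⟩
        refine ⟨h1, ?_, ?_⟩ <;> rw [← h3]
      · rintro ⟨h1, h2, h3⟩
        refine ⟨⟨h1, ?_, ?_, ?_⟩, by rw [Prod.ext_iff]; exact ⟨h2, h3⟩⟩
        · rw [hip p.1, h2]; exact hc1
        · rw [hip p.2, h3]; exact hc2
        · rw [hip _, hxor p.1 p.2, h2, h3]; exact hc3
    have hprod : (Finset.univ.filter fun p : (Fin n → Bool) × (Fin n → Bool) =>
          F p.1 = q.1 ∧ F p.2 = q.2)
        = (Finset.univ.filter fun h : Fin n → Bool => F h = q.1) ×ˢ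
          (Finset.univ.filter fun h : Fin n → Bool => F h = q.2) := by
      ext p
      simp [Finset.mem_product]
    rw [this, hprod, Finset.card_product, hF]
    rw [fiber_card_aux S q.1 (Finset.mem_powerset.1 hq1),
      fiber_card_aux S q.2 (Finset.mem_powerset.1 hq2), hScard]
  -- T.card = U.card
  set U : Finset ((_ : Finset (Fin n)) × Fin n) :=
    S.powerset.sigma fun a => S.filter fun j => a.card ≠ 1 ∧ (symmDiff a {j}).card ≠ 1 with hU
  have hTU : U.card = T.card := by
    apply Finset.card_bij (fun u _ => (u.1, symmDiff u.1 {u.2}))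
    · intro u hu
      rw [hU, Finset.mem_sigma, Finset.mem_filter] at hu
      obtain ⟨ha, hj, hne1, hne2⟩ := hu
      rw [hT, Finset.mem_filter, Finset.mem_product]
      refine ⟨⟨ha, Finset.mem_powerset.2 ?_⟩, hne1, hne2, ?_⟩
      · intro k hk
        rw [Finset.mem_symmDiff] at hk
        rcases hk with ⟨hk, _⟩ | ⟨hk, _⟩
        · exact Finset.mem_powerset.1 ha hk
        · rw [Finset.mem_singleton] at hk; subst hk; exact hj
      · rw [symmDiff_symmDiff_cancel_left, Finset.card_singleton]
    · intro u hu v hv huv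
      rw [Prod.ext_iff] at huv
      obtain ⟨h1, h2⟩ := huv
      dsimp at h1 h2
      rw [h1] at h2
      have h3 : ({u.2} : Finset (Fin n)) = {v.2} :=
        symmDiff_right_injective v.1 h2
      rw [Finset.singleton_inj] at h3
      exact Sigma.ext h1 (by rw [h3])
    · intro q hq
      rw [hT, Finset.mem_filter, Finset.mem_product] at hq
      obtain ⟨⟨hq1, hq2⟩, hc1, hc2, hc3⟩ := hq
      obtain ⟨j, hj⟩ := Finset.card_eq_one.1 hc3
      have hjS : j ∈ S := by
        have hjmem : j ∈ symmDiff q.1 q.2 := by rw [hj]; exact Finset.mem_singleton_self j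
        rw [Finset.mem_symmDiff] at hjmem
        rcases hjmem with ⟨hk, _⟩ | ⟨hk, _⟩
        · exact Finset.mem_powerset.1 hq1 hk
        · exact Finset.mem_powerset.1 hq2 hk
      have hq2eq : symmDiff q.1 {j} = q.2 := by
        rw [← hj, symmDiff_symmDiff_cancel_left]
      refine ⟨⟨q.1, j⟩, ?_, ?_⟩
      · rw [hU, Finset.mem_sigma, Finset.mem_filter]
        exact ⟨hq1, hjS, hc1, by rw [hq2eq]; exact hc2⟩
      · dsimp
        rw [hq2eq]
  -- U.card via sigma
  have hUcard : U.card = ∑ γ ∈ Finset.range (w + 1), w.choose γ * gfun w γ := by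
    rw [hU, Finset.card_sigma]
    have : ∀ a ∈ S.powerset,
        (S.filter fun j => a.card ≠ 1 ∧ (symmDiff a {j}).card ≠ 1).card = gfun w a.card := by
      intro a ha
      rw [inner_count_aux S a (Finset.mem_powerset.1 ha), hScard]
      rfl
    rw [Finset.sum_congr rfl this]
    rw [Finset.sum_powerset_apply_card (fun m => gfun w m), hScard]
    apply Finset.sum_congr rfl
    intro γ _
    rw [smul_eq_mul]
  -- assemble
  have hAfinal : A.card = (∑ γ ∈ Finset.range (w + 1), w.choose γ * gfun w γ)
      * (2 ^ (n - w) * 2 ^ (n - w)) := by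
    rw [hAcard, ← hTU, hUcard]
  rw [hAfinal]
  push_cast
  rw [show (∑ γ ∈ Finset.range (w + 1), (w.choose γ : ℤ) * (gfun w γ : ℤ))
      = 2 * ∑ γ ∈ Finset.Icc 2 w, (w.choose γ : ℤ) * ((w : ℤ) - γ) from key_aux w hw1]
  rw [show 2 * (n - w) + 1 = (n - w) + (n - w) + 1 by ring]
  ring
end

section
/- The number of K×N binary matrices G whose generated code has minimum distance at least 2 is at most 2^{KN}·(1 − N·2^{−N}) / ((2^K − 1)·N·2^{−N} + 1 − N·2^{−N}). -/
/-- The F₂-linear combination of the rows of `G` with coefficient vector `m`. -/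
def rowComb {K N : ℕ} (m : Fin K → ZMod 2) (G : Fin K → Fin N → ZMod 2) :
    Fin N → ZMod 2 := fun j => ∑ i, m i * G i j

/-- Hamming weight of a vector over F₂. -/
def wt2 {N : ℕ} (c : Fin N → ZMod 2) : ℕ :=
  (Finset.univ.filter fun j => c j = 1).card

/-- The minimum distance of the code generated by `G` is at least 2. -/
def dminGe2 {K N : ℕ} (G : Fin K → Fin N → ZMod 2) : Prop :=
  ∀ m : Fin K → ZMod 2, m ≠ 0 → wt2 (rowComb m G) ≠ 1

instance {K N : ℕ} (G : Fin K → Fin N → ZMod 2) : Decidable (dminGe2 G) := by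
  unfold dminGe2; infer_instance

open Finset

namespace Stmt16Aux

variable {K N : ℕ}

lemma zmod2_ne_zero {x : ZMod 2} (h : x ≠ 0) : x = 1 := by revert h; revert x; decide

lemma zmod2_ne_one {x : ZMod 2} (h : x ≠ 1) : x = 0 := by revert h; revert x; decide

lemma fiber_card_mul {V W : Type*} [Fintype V] [Fintype W] [DecidableEq V] [DecidableEq W]
    [AddCommGroup V] [AddCommGroup W] (f : V →+ W) (hsurj : Function.Surjective f) (w : W) :
    (univ.filter fun v => f v = w).card * Fintype.card W = Fintype.card V := by
  have key : ∀ w' : W, (univ.filter fun v => f v = w').card = (univ.filter fun v => f v = w).card := by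
    intro w'
    obtain ⟨v₀, hv₀⟩ := hsurj (w - w')
    apply Finset.card_bij (fun v _ => v + v₀)
    · intro v hv
      simp only [mem_filter, mem_univ, true_and] at hv ⊢
      rw [map_add, hv, hv₀]; abel
    · intro a ha b hb hab; exact add_right_cancel hab
    · intro u hu
      simp only [mem_filter, mem_univ, true_and] at hu ⊢
      exact ⟨u - v₀, by rw [map_sub, hu, hv₀]; abel, by abel⟩
  have h := Finset.card_eq_sum_card_fiberwise (f := fun v => f v) (s := univ) (t := univ)
    (fun x _ => mem_univ _)
  rw [Finset.card_univ] at h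
  rw [h]
  simp only [key]
  rw [Finset.sum_const, Finset.card_univ, smul_eq_mul, mul_comm]

lemma sum_single (m : Fin K → ZMod 2) (i₀ : Fin K) (b : ZMod 2) :
    ∑ i, m i * (Pi.single i₀ b : Fin K → ZMod 2) i = m i₀ * b := by
  have h : ∀ i, m i * (Pi.single i₀ b : Fin K → ZMod 2) i = if i = i₀ then m i * b else 0 := by
    intro i
    by_cases h : i = i₀ <;> simp [Pi.single_apply, h]
  simp only [h, Finset.sum_ite_eq' univ i₀, mem_univ, if_true]

lemma sum_add_split (m u w : Fin K → ZMod 2) :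
    ∑ i, m i * (u + w) i = (∑ i, m i * u i) + ∑ i, m i * w i := by
  rw [← Finset.sum_add_distrib]; exact Finset.sum_congr rfl fun i _ => by
    simp only [Pi.add_apply]; ring

lemma scalar_pair (m m' : Fin K → ZMod 2) (hm : m ≠ 0) (hm' : m' ≠ 0) (hne : m ≠ m')
    (b b' : ZMod 2) : ∃ v : Fin K → ZMod 2, ∑ i, m i * v i = b ∧ ∑ i, m' i * v i = b' := by
  have key : ∃ u w : Fin K → ZMod 2, (∑ i, m i * u i = 1 ∧ ∑ i, m' i * u i = 0)
      ∧ (∑ i, m i * w i = 0 ∧ ∑ i, m' i * w i = 1) := by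
    obtain ⟨i₀, hi₀⟩ : ∃ i, m i ≠ m' i := by
      by_contra h; push_neg at h; exact hne (funext h)
    have hcase := (by decide : ∀ x y : ZMod 2, x ≠ y → (x = 1 ∧ y = 0) ∨ (x = 0 ∧ y = 1)) _ _ hi₀
    rcases hcase with ⟨h1, h0⟩ | ⟨h0, h1⟩
    · obtain ⟨i₁, hi₁⟩ : ∃ i, m' i ≠ 0 := by
        by_contra h; push_neg at h; exact hm' (funext h)
      replace hi₁ := zmod2_ne_zero hi₁
      refine ⟨Pi.single i₀ 1, Pi.single i₁ 1 + Pi.single i₀ (m i₁), ⟨?_, ?_⟩, ⟨?_, ?_⟩⟩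
      · rw [sum_single, h1, mul_one]
      · rw [sum_single, h0, zero_mul]
      · rw [sum_add_split, sum_single, sum_single, h1, mul_one, one_mul]
        exact CharTwo.add_self_eq_zero _
      · rw [sum_add_split, sum_single, sum_single, h0, hi₁, one_mul, zero_mul, add_zero]
    · obtain ⟨i₁, hi₁⟩ : ∃ i, m i ≠ 0 := by
        by_contra h; push_neg at h; exact hm (funext h)
      replace hi₁ := zmod2_ne_zero hi₁
      refine ⟨Pi.single i₁ 1 + Pi.single i₀ (m' i₁), Pi.single i₀ 1, ⟨?_, ?_⟩, ⟨?_, ?_⟩⟩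
      · rw [sum_add_split, sum_single, sum_single, h0, hi₁, one_mul, zero_mul, add_zero]
      · rw [sum_add_split, sum_single, sum_single, h1, mul_one, one_mul]
        exact CharTwo.add_self_eq_zero _
      · rw [sum_single, h0, zero_mul]
      · rw [sum_single, h1, mul_one]
  obtain ⟨u, w, ⟨hu1, hu2⟩, ⟨hw1, hw2⟩⟩ := key
  have expand : ∀ (mm : Fin K → ZMod 2), ∑ i, mm i * (b • u + b' • w) i
      = b * (∑ i, mm i * u i) + b' * (∑ i, mm i * w i) := by
    intro mm
    rw [Finset.mul_sum, Finset.mul_sum, ← Finset.sum_add_distrib]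
    exact Finset.sum_congr rfl fun i _ => by
      simp only [Pi.add_apply, Pi.smul_apply, smul_eq_mul]; ring
  exact ⟨b • u + b' • w, by rw [expand, hu1, hw1]; ring, by rw [expand, hu2, hw2]; ring⟩

def rowCombHom (m : Fin K → ZMod 2) : (Fin K → Fin N → ZMod 2) →+ (Fin N → ZMod 2) :=
  AddMonoidHom.mk' (rowComb m) (by
    intro a b; funext j
    simp [rowComb, mul_add, Finset.sum_add_distrib])

def pairHom (m m' : Fin K → ZMod 2) :
    (Fin K → Fin N → ZMod 2) →+ ((Fin N → ZMod 2) × (Fin N → ZMod 2)) :=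
  ((rowCombHom (N := N) m).prod (rowCombHom (N := N) m'))

lemma count_one (m : Fin K → ZMod 2) (hm : m ≠ 0) (c : Fin N → ZMod 2) :
    (univ.filter fun G : Fin K → Fin N → ZMod 2 => rowComb m G = c).card * 2 ^ N
      = 2 ^ (K * N) := by
  obtain ⟨i₀, hi₀⟩ : ∃ i, m i ≠ 0 := by
    by_contra h; push_neg at h; exact hm (funext h)
  replace hi₀ := zmod2_ne_zero hi₀
  have hsurj : Function.Surjective (rowCombHom (N := N) m) := by
    intro c
    have key : rowComb m (fun i j => (Pi.single i₀ (c j) : Fin K → ZMod 2) i) = c :=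
      funext fun j => by rw [rowComb, sum_single m i₀ (c j), hi₀, one_mul]
    exact ⟨_, key⟩
  have h := fiber_card_mul (rowCombHom (N := N) m) hsurj c
  simp only [Fintype.card_fun, Fintype.card_fin, ZMod.card] at h
  rw [← pow_mul, Nat.mul_comm N K] at h
  exact h

lemma count_two (m m' : Fin K → ZMod 2) (hm : m ≠ 0) (hm' : m' ≠ 0) (hne : m ≠ m')
    (c c' : Fin N → ZMod 2) :
    (univ.filter fun G : Fin K → Fin N → ZMod 2 =>
        rowComb m G = c ∧ rowComb m' G = c').card * 2 ^ (2 * N) = 2 ^ (K * N) := by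
  have hsurj : Function.Surjective (pairHom (N := N) m m') := by
    rintro ⟨c, c'⟩
    choose v hv1 hv2 using fun j => scalar_pair m m' hm hm' hne (c j) (c' j)
    refine ⟨fun i j => v j i, ?_⟩
    refine Prod.ext (funext fun j => ?_) (funext fun j => ?_)
    · exact hv1 j
    · exact hv2 j
  have h := fiber_card_mul (pairHom (N := N) m m') hsurj (c, c')
  simp only [Fintype.card_prod, Fintype.card_fun, Fintype.card_fin, ZMod.card] at h
  rw [← pow_mul, Nat.mul_comm N K, ← pow_add] at h
  have hset : (univ.filter fun v : Fin K → Fin N → ZMod 2 => pairHom (N := N) m m' v = (c, c'))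
      = (univ.filter fun G : Fin K → Fin N → ZMod 2 => rowComb m G = c ∧ rowComb m' G = c') := by
    ext G
    simp only [mem_filter, mem_univ, true_and, pairHom, AddMonoidHom.prod_apply, Prod.mk.injEq]
    rfl
  rw [hset] at h
  rw [two_mul]
  exact h

lemma W1_card : (univ.filter fun c : Fin N → ZMod 2 => wt2 c = 1).card = N := by
  have key : (univ : Finset (Fin N)).card = (univ.filter fun c : Fin N → ZMod 2 => wt2 c = 1).card := by
    refine Finset.card_bij (fun j _ => (Pi.single j 1 : Fin N → ZMod 2)) ?_ ?_ ?_
    · intro j _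
      simp only [mem_filter, mem_univ, true_and]; simp only [wt2]
      rw [show (univ.filter fun j' => (Pi.single j 1 : Fin N → ZMod 2) j' = 1) = {j} from ?_]
      · exact Finset.card_singleton j
      · ext j'
        simp only [mem_filter, mem_univ, true_and, mem_singleton, Pi.single_apply]
        constructor
        · intro h; by_contra hne; rw [if_neg hne] at h; exact one_ne_zero h.symm
        · intro h; rw [if_pos h]
    · intro a _ b _ hab
      by_contra hne
      have h2 := congrFun hab a
      simp only [Pi.single_apply, if_pos rfl] at h2
      simp [hne] at h2
    · intro c hc
      simp only [mem_filter, mem_univ, true_and] at hc; simp only [wt2] at hc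
      obtain ⟨j, hj⟩ := Finset.card_eq_one.mp hc
      refine ⟨j, mem_univ j, funext fun j' => ?_⟩
      have hmem : ∀ j'', c j'' = 1 ↔ j'' ∈ ({j} : Finset (Fin N)) := by
        intro j''; rw [← hj]; simp
      by_cases h : j' = j
      · subst h
        simp only [Pi.single_apply, if_pos rfl]
        exact ((hmem j').mpr (Finset.mem_singleton_self j')).symm
      · show (Pi.single j 1 : Fin N → ZMod 2) j' = c j'
        rw [Pi.single_apply, if_neg h]
        symm
        apply zmod2_ne_one
        intro hc1
        exact h (Finset.mem_singleton.mp ((hmem j').mp hc1))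
  rw [← key, Finset.card_univ, Fintype.card_fin]

lemma card_G : Fintype.card (Fin K → Fin N → ZMod 2) = 2 ^ (K * N) := by
  simp only [Fintype.card_fun, Fintype.card_fin, ZMod.card]
  rw [← pow_mul, Nat.mul_comm N K]

/-- nonzero message vectors -/
def Mne (K : ℕ) : Finset (Fin K → ZMod 2) := univ.filter (· ≠ 0)

lemma Mne_card : (Mne K).card = 2 ^ K - 1 := by
  rw [Mne, Finset.filter_ne', Finset.card_erase_of_mem (mem_univ 0), Finset.card_univ,
    Fintype.card_fun, Fintype.card_fin, ZMod.card]

/-- the count `A₁(G)` of nonzero messages giving weight-1 codewords -/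
def Xcnt (G : Fin K → Fin N → ZMod 2) : ℕ :=
  ((Mne K).filter fun m => wt2 (rowComb m G) = 1).card

lemma Xcnt_zero_iff (G : Fin K → Fin N → ZMod 2) : Xcnt G = 0 ↔ dminGe2 G := by
  rw [Xcnt, Finset.card_eq_zero, Finset.filter_eq_empty_iff]
  constructor
  · intro h m hm hw
    exact h (Finset.mem_filter.mpr ⟨mem_univ m, hm⟩) hw
  · intro h m hm
    exact h m (Finset.mem_filter.mp hm).2

lemma inner_one (m : Fin K → ZMod 2) (hm : m ≠ 0) :
    (univ.filter fun G : Fin K → Fin N → ZMod 2 => wt2 (rowComb m G) = 1).card * 2 ^ N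
      = N * 2 ^ (K * N) := by
  set s := univ.filter fun G : Fin K → Fin N → ZMod 2 => wt2 (rowComb m G) = 1 with hs
  set W1 := univ.filter fun c : Fin N → ZMod 2 => wt2 c = 1 with hW1
  have hcard : s.card = ∑ c ∈ W1, (s.filter fun G => rowComb m G = c).card :=
    Finset.card_eq_sum_card_fiberwise (fun G hG => by
      simp only [Finset.mem_coe, hs, hW1, mem_filter, mem_univ, true_and] at hG ⊢; exact hG)
  have hfib : ∀ c ∈ W1, (s.filter fun G => rowComb m G = c)
      = univ.filter fun G : Fin K → Fin N → ZMod 2 => rowComb m G = c := by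
    intro c hc
    rw [hW1, mem_filter] at hc
    ext G
    simp only [hs, Finset.filter_filter, mem_filter, mem_univ, true_and]
    constructor
    · rintro ⟨_, h⟩; exact h
    · intro h; exact ⟨by rw [h]; exact hc.2, h⟩
  rw [hcard, Finset.sum_mul]
  rw [Finset.sum_congr rfl fun c hc => by rw [hfib c hc, count_one m hm c]]
  rw [Finset.sum_const, W1_card, smul_eq_mul]

lemma inner_two (m m' : Fin K → ZMod 2) (hm : m ≠ 0) (hm' : m' ≠ 0) (hne : m ≠ m') :
    (univ.filter fun G : Fin K → Fin N → ZMod 2 =>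
        wt2 (rowComb m G) = 1 ∧ wt2 (rowComb m' G) = 1).card * 2 ^ (2 * N)
      = N ^ 2 * 2 ^ (K * N) := by
  set s := univ.filter fun G : Fin K → Fin N → ZMod 2 =>
    wt2 (rowComb m G) = 1 ∧ wt2 (rowComb m' G) = 1 with hs
  set W1 := univ.filter fun c : Fin N → ZMod 2 => wt2 c = 1 with hW1
  have hcard : s.card = ∑ cc ∈ W1 ×ˢ W1,
      (s.filter fun G => (rowComb m G, rowComb m' G) = cc).card :=
    Finset.card_eq_sum_card_fiberwise (fun G hG => by
      simp only [Finset.mem_coe, hs, mem_filter, mem_univ, true_and] at hG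
      rw [Finset.mem_coe, Finset.mem_product]
      constructor <;> simp only [hW1, mem_filter, mem_univ, true_and]
      · exact hG.1
      · exact hG.2)
  have hfib : ∀ cc ∈ W1 ×ˢ W1, (s.filter fun G => (rowComb m G, rowComb m' G) = cc)
      = univ.filter fun G : Fin K → Fin N → ZMod 2 =>
          rowComb m G = cc.1 ∧ rowComb m' G = cc.2 := by
    intro cc hcc
    obtain ⟨c, c'⟩ := cc
    rw [Finset.mem_product] at hcc
    obtain ⟨hc1, hc2⟩ := hcc
    rw [hW1, mem_filter] at hc1 hc2
    ext G
    simp only [hs, Finset.filter_filter, mem_filter, mem_univ, true_and, Prod.mk.injEq]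
    constructor
    · rintro ⟨_, h1, h2⟩; exact ⟨h1, h2⟩
    · rintro ⟨h1, h2⟩
      exact ⟨⟨by rw [h1]; exact hc1.2, by rw [h2]; exact hc2.2⟩, h1, h2⟩
  rw [hcard, Finset.sum_mul]
  rw [Finset.sum_congr rfl fun cc hcc => by
    rw [hfib cc hcc, count_two m m' hm hm' hne cc.1 cc.2]]
  rw [Finset.sum_const, Finset.card_product, W1_card, smul_eq_mul, sq]

lemma ite_one_mul (p q : Prop) [Decidable p] [Decidable q] :
    (if p then (1 : ℕ) else 0) * (if q then 1 else 0) = if p ∧ q then 1 else 0 := by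
  by_cases hp : p <;> by_cases hq : q <;> simp [hp, hq]

lemma sum_X : (∑ G : Fin K → Fin N → ZMod 2, Xcnt G) * 2 ^ N
    = (2 ^ K - 1) * (N * 2 ^ (K * N)) := by
  have swap : ∑ G : Fin K → Fin N → ZMod 2, Xcnt G
      = ∑ m ∈ Mne K, (univ.filter fun G : Fin K → Fin N → ZMod 2 =>
          wt2 (rowComb m G) = 1).card := by
    simp only [Xcnt, Finset.card_filter]
    exact Finset.sum_comm
  rw [swap, Finset.sum_mul]
  have hcong : ∑ m ∈ Mne K, (univ.filter fun G : Fin K → Fin N → ZMod 2 =>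
      wt2 (rowComb m G) = 1).card * 2 ^ N = ∑ _m ∈ Mne K, N * 2 ^ (K * N) :=
    Finset.sum_congr rfl fun m hm => inner_one m ((Finset.mem_filter.mp hm).2)
  rw [hcong, Finset.sum_const, Mne_card, smul_eq_mul]

lemma sum_X_sq : (∑ G : Fin K → Fin N → ZMod 2, (Xcnt G) ^ 2) * 2 ^ (2 * N)
    = (2 ^ K - 1) * (N * 2 ^ (K * N) * 2 ^ N) + (2 ^ K - 1) * ((2 ^ K - 2) * (N ^ 2 * 2 ^ (K * N))) := by
  have expand : ∀ G : Fin K → Fin N → ZMod 2, (Xcnt G) ^ 2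
      = ∑ m ∈ Mne K, ∑ m' ∈ Mne K,
          if wt2 (rowComb m G) = 1 ∧ wt2 (rowComb m' G) = 1 then 1 else 0 := by
    intro G
    rw [Xcnt, sq, Finset.card_filter, Finset.sum_mul_sum]
    exact Finset.sum_congr rfl fun m _ => Finset.sum_congr rfl fun m' _ => ite_one_mul _ _
  have swap : ∑ G : Fin K → Fin N → ZMod 2, (Xcnt G) ^ 2
      = ∑ m ∈ Mne K, ∑ m' ∈ Mne K, (univ.filter fun G : Fin K → Fin N → ZMod 2 =>
          wt2 (rowComb m G) = 1 ∧ wt2 (rowComb m' G) = 1).card := by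
    simp only [expand]
    rw [Finset.sum_comm]
    refine Finset.sum_congr rfl fun m _ => ?_
    rw [Finset.sum_comm]
    exact Finset.sum_congr rfl fun m' _ => (Finset.card_filter _ _).symm
  rw [swap, Finset.sum_mul]
  have inner : ∀ m ∈ Mne K, (∑ m' ∈ Mne K, (univ.filter fun G : Fin K → Fin N → ZMod 2 =>
      wt2 (rowComb m G) = 1 ∧ wt2 (rowComb m' G) = 1).card) * 2 ^ (2 * N)
      = N * 2 ^ (K * N) * 2 ^ N + (2 ^ K - 2) * (N ^ 2 * 2 ^ (K * N)) := by
    intro m hm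
    have hm0 : m ≠ 0 := (Finset.mem_filter.mp hm).2
    rw [← Finset.add_sum_erase (Mne K) _ hm, add_mul, Finset.sum_mul]
    congr 1
    · have hdiag : (univ.filter fun G : Fin K → Fin N → ZMod 2 =>
          wt2 (rowComb m G) = 1 ∧ wt2 (rowComb m G) = 1)
          = univ.filter fun G : Fin K → Fin N → ZMod 2 => wt2 (rowComb m G) = 1 := by
        ext G; simp [and_self]
      rw [hdiag, two_mul, pow_add, ← mul_assoc, inner_one m hm0]
    · have hcong : ∑ m' ∈ (Mne K).erase m, (univ.filter fun G : Fin K → Fin N → ZMod 2 =>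
          wt2 (rowComb m G) = 1 ∧ wt2 (rowComb m' G) = 1).card * 2 ^ (2 * N)
          = ∑ _m' ∈ (Mne K).erase m, N ^ 2 * 2 ^ (K * N) := by
        refine Finset.sum_congr rfl fun m' hm' => ?_
        exact inner_two m m' hm0 ((Finset.mem_filter.mp (Finset.mem_of_mem_erase hm')).2)
          (Ne.symm (Finset.ne_of_mem_erase hm'))
      rw [hcong, Finset.sum_const, Finset.card_erase_of_mem hm, Mne_card, smul_eq_mul,
        Nat.sub_sub]
  have hcong2 : ∑ m ∈ Mne K, (∑ m' ∈ Mne K, (univ.filter fun G : Fin K → Fin N → ZMod 2 =>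
      wt2 (rowComb m G) = 1 ∧ wt2 (rowComb m' G) = 1).card) * 2 ^ (2 * N)
      = ∑ _m ∈ Mne K, (N * 2 ^ (K * N) * 2 ^ N + (2 ^ K - 2) * (N ^ 2 * 2 ^ (K * N))) :=
    Finset.sum_congr rfl inner
  rw [hcong2, Finset.sum_const, Mne_card, smul_eq_mul, mul_add]

end Stmt16Aux

theorem stmt16 (K N : ℕ) (hK : 1 ≤ K) (hKN : K < N) :
    ((Finset.univ.filter fun G : Fin K → Fin N → ZMod 2 => dminGe2 G).card : ℝ)
      ≤ 2 ^ (K * N) * (1 - (N : ℝ) * 2 ^ (-(N : ℝ)))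
          / (((2 : ℝ) ^ K - 1) * N * 2 ^ (-(N : ℝ)) + 1 - (N : ℝ) * 2 ^ (-(N : ℝ))) := by
  classical
  have hN2 : 2 ≤ N := by omega
  have h1K : 1 ≤ 2 ^ K := Nat.one_le_two_pow
  have h2K : 2 ≤ 2 ^ K := by
    calc (2 : ℕ) = 2 ^ 1 := (pow_one 2).symm
    _ ≤ 2 ^ K := Nat.pow_le_pow_right (by norm_num) hK
  set E : ℝ := (2 : ℝ) ^ N with hEdef
  have hEpos : (0 : ℝ) < E := by positivity
  set P : ℝ := (2 : ℝ) ^ (K * N) with hPdef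
  have hPpos : (0 : ℝ) < P := by positivity
  set q : ℝ := (2 : ℝ) ^ K - 1 with hqdef
  have hqcast : ((2 ^ K - 1 : ℕ) : ℝ) = q := by
    rw [hqdef, Nat.cast_sub h1K]; push_cast; ring
  have hq2cast : ((2 ^ K - 2 : ℕ) : ℝ) = q - 1 := by
    rw [hqdef, Nat.cast_sub h2K]; push_cast; ring
  have hq1 : (1 : ℝ) ≤ q := by
    rw [← hqcast]
    exact_mod_cast (by omega : 1 ≤ 2 ^ K - 1)
  have hNpos : (0 : ℝ) < (N : ℝ) := by exact_mod_cast (by omega : 0 < N)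
  set Xr : (Fin K → Fin N → ZMod 2) → ℝ := fun G => (Stmt16Aux.Xcnt G : ℝ) with hXr
  set T : ℝ := ∑ G : Fin K → Fin N → ZMod 2, Xr G with hTdef
  set T2 : ℝ := ∑ G : Fin K → Fin N → ZMod 2, (Xr G) ^ 2 with hT2def
  have hT : T * E = q * ((N : ℝ) * P) := by
    have h := Stmt16Aux.sum_X (K := K) (N := N)
    calc T * E = (((∑ G : Fin K → Fin N → ZMod 2, Stmt16Aux.Xcnt G) * 2 ^ N : ℕ) : ℝ) := by
          rw [hTdef, hEdef]; push_cast; ring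
    _ = (((2 ^ K - 1) * ((N : ℕ) * 2 ^ (K * N)) : ℕ) : ℝ) := by rw [h]
    _ = q * ((N : ℝ) * P) := by rw [Nat.cast_mul, hqcast, hPdef]; push_cast; ring
  have hT2 : T2 * E ^ 2 = q * ((N : ℝ) * P * E) + q * ((q - 1) * ((N : ℝ) ^ 2 * P)) := by
    have h := Stmt16Aux.sum_X_sq (K := K) (N := N)
    calc T2 * E ^ 2
        = (((∑ G : Fin K → Fin N → ZMod 2, (Stmt16Aux.Xcnt G) ^ 2) * 2 ^ (2 * N) : ℕ) : ℝ) := by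
          rw [hT2def, hEdef]; push_cast; ring
    _ = (((2 ^ K - 1) * ((N : ℕ) * 2 ^ (K * N) * 2 ^ N)
          + (2 ^ K - 1) * ((2 ^ K - 2) * ((N : ℕ) ^ 2 * 2 ^ (K * N))) : ℕ) : ℝ) := by rw [h]
    _ = q * ((N : ℝ) * P * E) + q * ((q - 1) * ((N : ℝ) ^ 2 * P)) := by
          push_cast [hqcast, hq2cast]
          rw [hPdef, hEdef]
  set B := Finset.univ.filter fun G : Fin K → Fin N → ZMod 2 => ¬ dminGe2 G with hB
  have hXzero : ∀ G : Fin K → Fin N → ZMod 2, G ∉ B → Xr G = 0 := by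
    intro G hG
    rw [hB, Finset.mem_filter] at hG
    push_neg at hG
    have hd : dminGe2 G := hG (Finset.mem_univ G)
    have hz : Stmt16Aux.Xcnt G = 0 := (Stmt16Aux.Xcnt_zero_iff G).mpr hd
    simp [hXr, hz]
  have hTB : ∑ G ∈ B, Xr G = T :=
    Finset.sum_subset (Finset.subset_univ B) (fun G _ hGB => hXzero G hGB)
  have hT2B : ∑ G ∈ B, (Xr G) ^ 2 = T2 :=
    Finset.sum_subset (Finset.subset_univ B) (fun G _ hGB => by rw [hXzero G hGB]; ring)
  have hCS : T ^ 2 ≤ (B.card : ℝ) * T2 := by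
    have h := Finset.sum_mul_sq_le_sq_mul_sq B (fun _ => (1 : ℝ)) Xr
    simp only [one_mul, one_pow] at h
    rw [hTB, hT2B, Finset.sum_const, nsmul_eq_mul, mul_one] at h
    exact h
  have hABcard : (Finset.univ.filter fun G : Fin K → Fin N → ZMod 2 => dminGe2 G).card
      + B.card = 2 ^ (K * N) := by
    rw [hB, Finset.card_filter_add_card_filter_not, Finset.card_univ]
    exact Stmt16Aux.card_G
  set F : ℝ := E + (q - 1) * N with hFdef
  have hFpos : 0 < F := by
    rw [hFdef]
    have : 0 ≤ (q - 1) * N := mul_nonneg (by linarith) (le_of_lt hNpos)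
    linarith
  have hqNPpos : 0 < q * (N : ℝ) * P := by
    apply mul_pos (mul_pos (by linarith) hNpos) hPpos
  have hT2F : T2 * E ^ 2 = q * (N : ℝ) * P * F := by rw [hT2, hFdef]; ring
  have hb : q * (N : ℝ) * P ≤ (B.card : ℝ) * F := by
    have h2 : T ^ 2 * E ^ 2 ≤ (B.card : ℝ) * T2 * E ^ 2 :=
      mul_le_mul_of_nonneg_right hCS (by positivity)
    have h5 : (q * (N : ℝ) * P) * (q * (N : ℝ) * P) ≤ ((B.card : ℝ) * F) * (q * (N : ℝ) * P) := by
      calc (q * (N : ℝ) * P) * (q * (N : ℝ) * P) = (T * E) ^ 2 := by rw [hT]; ring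
      _ = T ^ 2 * E ^ 2 := by ring
      _ ≤ (B.card : ℝ) * T2 * E ^ 2 := h2
      _ = (B.card : ℝ) * (T2 * E ^ 2) := by ring
      _ = ((B.card : ℝ) * F) * (q * (N : ℝ) * P) := by rw [hT2F]; ring
    exact le_of_mul_le_mul_right h5 hqNPpos
  have ha : ((Finset.univ.filter fun G : Fin K → Fin N → ZMod 2 => dminGe2 G).card : ℝ)
      = P - (B.card : ℝ) := by
    have h := congrArg (Nat.cast : ℕ → ℝ) hABcard
    push_cast at h
    rw [hPdef]
    linarith
  have hEinv : (2 : ℝ) ^ (-(N : ℝ)) = E⁻¹ := by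
    rw [hEdef, ← Real.rpow_natCast (2 : ℝ) N, ← Real.rpow_neg (by norm_num)]
  rw [hEinv]
  have hEne : E ≠ 0 := ne_of_gt hEpos
  have hFne : F ≠ 0 := ne_of_gt hFpos
  have hden : q * (N : ℝ) * E⁻¹ + 1 - (N : ℝ) * E⁻¹ = F / E := by
    rw [hFdef]; field_simp; ring
  have hdenne : q * (N : ℝ) * E⁻¹ + 1 - (N : ℝ) * E⁻¹ ≠ 0 := by
    rw [hden]
    exact div_ne_zero hFne hEne
  have hRHS : P * (1 - (N : ℝ) * E⁻¹) / (q * (N : ℝ) * E⁻¹ + 1 - (N : ℝ) * E⁻¹)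
      = P - q * (N : ℝ) * P / F := by
    rw [hden]
    field_simp
    rw [hFdef]
    ring
  rw [hRHS, ha]
  have hdivle : q * (N : ℝ) * P / F ≤ (B.card : ℝ) := (div_le_iff₀ hFpos).mpr hb
  linarith
end
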